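/- Let (W, X) be distributed according to 𝒫 with W ∈ {0,1}^T, let S = S(W, X) be a statistic such that W̄ := (1/T)·Σ_t W_t is measurable with respect to σ(S, X), and suppose E[W_t | S, X] ≤ 1 − η almost surely for all t, for some η > 0, and that the functions ψ_t := ψ(X, S, t) ∈ ℝ^p are bounded and measurable. Then there exist a σ(W, X)-measurable random variable α* and a vector γ* ∈ ℝ^p such that, with ξ_t := W_t − α* − ψ_tᵀγ* and m_t := 1 − W_t·1{ξ_t ≤ 0}, the following hold: E[Σ_{t=1}^T ξ_t ψ_t m_t] = 0 (in ℝ^p), and Σ_{t=1}^T ξ_t m_t = 0 almost surely. -/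

import Mathlib

open MeasureTheory
open scoped BigOperators

noncomputable def xm (w u : ℝ) : ℝ := (w - u) * (1 - w * (if w - u ≤ 0 then (1:ℝ) else 0))

noncomputable def gg (w u : ℝ) : ℝ :=
  (1 - w) * (u ^ 2 / 2) + w * ((max (1 - u) 0) ^ 2 / 2)

lemma xm_zero (u : ℝ) : xm 0 u = -u := by simp [xm]

lemma xm_one (u : ℝ) : xm 1 u = max (1 - u) 0 := by
  unfold xm
  rcases le_or_gt (1 - u) 0 with h | h
  · simp [h]
  · rw [if_neg (by linarith), max_eq_left h.le]; ring

lemma gg_zero (u : ℝ) : gg 0 u = u ^ 2 / 2 := by simp [gg]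

lemma gg_one (u : ℝ) : gg 1 u = (max (1 - u) 0) ^ 2 / 2 := by simp [gg]

lemma gg_nonneg {w : ℝ} (hw : w = 0 ∨ w = 1) (u : ℝ) : 0 ≤ gg w u := by
  rcases hw with h | h <;> subst h <;> [rw [gg_zero]; rw [gg_one]] <;> positivity

lemma key1 {w : ℝ} (hw : w = 0 ∨ w = 1) (u u' : ℝ) :
    gg w u - xm w u * (u' - u) ≤ gg w u' := by
  rcases hw with h | h <;> subst h
  · rw [gg_zero, gg_zero, xm_zero]; nlinarith [sq_nonneg (u' - u)]
  · rw [gg_one, gg_one, xm_one]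
    rcases le_or_gt (1 - u) 0 with h1 | h1
    · rw [max_eq_right h1]
      nlinarith [le_max_left (1 - u') (0:ℝ), le_max_right (1 - u') (0:ℝ),
        sq_nonneg (max (1 - u') 0)]
    · rw [max_eq_left h1.le]
      nlinarith [le_max_left (1 - u') (0:ℝ), le_max_right (1 - u') (0:ℝ),
        sq_nonneg (max (1 - u') 0 - (1 - u))]

lemma key2 {w : ℝ} (hw : w = 0 ∨ w = 1) (u δ : ℝ) :
    gg w (u + δ) ≤ gg w u - xm w u * δ + δ ^ 2 / 2 := by
  rcases hw with h | h <;> subst h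
  · rw [gg_zero, gg_zero, xm_zero]; ring_nf; nlinarith [sq_nonneg (0:ℝ)]
  · rw [gg_one, gg_one, xm_one]
    rcases max_cases (1 - (u + δ)) (0:ℝ) with ⟨he, hc⟩ | ⟨he, hc⟩ <;> rw [he] <;>
      nlinarith [le_max_left (1 - u) (0:ℝ), le_max_right (1 - u) (0:ℝ),
        sq_nonneg (max (1 - u) 0 - δ)]

lemma xm_abs {w : ℝ} (hw : w = 0 ∨ w = 1) (u : ℝ) : |xm w u| ≤ 1 + |u| := by
  rcases hw with h | h <;> subst h
  · rw [xm_zero, abs_neg]; linarith [abs_nonneg u]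
  · rw [xm_one, abs_of_nonneg (le_max_right _ _)]
    rcases max_cases (1 - u) (0:ℝ) with ⟨he, hc⟩ | ⟨he, hc⟩ <;> rw [he] <;>
      [linarith [neg_abs_le u]; linarith [abs_nonneg u]]

lemma xm_antitone {w : ℝ} (hw : w = 0 ∨ w = 1) {u u' : ℝ} (h : u ≤ u') :
    xm w u' ≤ xm w u := by
  rcases hw with hh | hh <;> subst hh
  · rw [xm_zero, xm_zero]; linarith
  · rw [xm_one, xm_one]
    exact max_le_max (by linarith) le_rfl

lemma gg_bound {w : ℝ} (hw : w = 0 ∨ w = 1) (u : ℝ) : gg w u ≤ (1 + |u|) ^ 2 / 2 := by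
  rcases hw with h | h <;> subst h
  · rw [gg_zero]; nlinarith [abs_nonneg u, sq_abs u, le_abs_self u, neg_abs_le u]
  · rw [gg_one]
    rcases max_cases (1 - u) (0:ℝ) with ⟨he, hc⟩ | ⟨he, hc⟩ <;> rw [he] <;>
      nlinarith [abs_nonneg u, le_abs_self u, neg_abs_le u]
noncomputable def Phi {T : ℕ} (w c : Fin T → ℝ) (a : ℝ) : ℝ := ∑ t, xm (w t) (a + c t)

noncomputable def Gs {T : ℕ} (w c : Fin T → ℝ) (a : ℝ) : ℝ := ∑ t, gg (w t) (a + c t)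

noncomputable def Astar {T : ℕ} (w c : Fin T → ℝ) : ℝ := sInf {a | Phi w c a ≤ 0}

section PhiLemmas

variable {T : ℕ} {w c : Fin T → ℝ} (hw : ∀ t, w t = 0 ∨ w t = 1)
include hw

lemma Phi_antitone {a a' : ℝ} (h : a ≤ a') : Phi w c a' ≤ Phi w c a := by
  refine Finset.sum_le_sum fun t _ => xm_antitone (hw t) (by linarith)

lemma Phi_cont : Continuous fun a => Phi w c a := by
  refine continuous_finset_sum _ fun t _ => ?_
  rcases hw t with h | h <;> rw [h]
  · have : (fun a => xm 0 (a + c t)) = fun a => -(a + c t) := by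
      funext a; rw [xm_zero]
    rw [this]; fun_prop
  · have : (fun a => xm 1 (a + c t)) = fun a => max (1 - (a + c t)) 0 := by
      funext a; rw [xm_one]
    rw [this]; fun_prop

lemma Phi_nonpos_top : Phi w c (1 + ∑ t, |c t|) ≤ 0 := by
  refine Finset.sum_nonpos fun t _ => ?_
  have h1 : (1:ℝ) ≤ (1 + ∑ t, |c t|) + c t := by
    have := Finset.single_le_sum (fun (i : Fin T) (_ : i ∈ Finset.univ) => abs_nonneg (c i))
      (Finset.mem_univ t)
    linarith [neg_abs_le (c t)]
  rcases hw t with h | h <;> rw [h]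
  · rw [xm_zero]; linarith
  · rw [xm_one, max_eq_right (by linarith)]

lemma Phi_pos_bot (hT : 0 < T) {a : ℝ} (ha : a < -∑ t, |c t|) : 0 < Phi w c a := by
  have : ∀ t ∈ Finset.univ, 0 < xm (w t) (a + c t) := by
    intro t _
    have h1 : a + c t < 0 := by
      have := Finset.single_le_sum (fun (i : Fin T) (_ : i ∈ Finset.univ) => abs_nonneg (c i))
        (Finset.mem_univ t)
      linarith [le_abs_self (c t)]
    rcases hw t with h | h <;> rw [h]
    · rw [xm_zero]; linarith
    · rw [xm_one]; rw [max_eq_left (by linarith)]; linarith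
  exact Finset.sum_pos this ⟨⟨0, hT⟩, Finset.mem_univ _⟩

lemma Astar_set_nonempty : Set.Nonempty {a | Phi w c a ≤ 0} :=
  ⟨1 + ∑ t, |c t|, Phi_nonpos_top hw⟩

lemma Astar_set_bdd (hT : 0 < T) : BddBelow {a | Phi w c a ≤ 0} := by
  refine ⟨-∑ t, |c t|, fun x hx => ?_⟩
  by_contra hc
  exact absurd hx (not_le.mpr (Phi_pos_bot hw hT (not_le.mp hc)))

lemma Astar_le_iff (hT : 0 < T) {r : ℝ} :
    Astar w c ≤ r ↔ Phi w c r ≤ 0 := by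
  constructor
  · intro h
    have hmem : Phi w c (Astar w c) ≤ 0 := by
      have hclosed : IsClosed {a | Phi w c a ≤ 0} :=
        isClosed_le (Phi_cont hw) continuous_const
      exact hclosed.csInf_mem (Astar_set_nonempty hw) (Astar_set_bdd hw hT)
    calc Phi w c r ≤ Phi w c (Astar w c) := Phi_antitone hw h
    _ ≤ 0 := hmem
  · intro h
    exact csInf_le (Astar_set_bdd hw hT) h

lemma Astar_lb (hT : 0 < T) : -∑ t, |c t| ≤ Astar w c :=
  le_csInf (Astar_set_nonempty hw) fun x hx => by
    by_contra hc
    exact absurd hx (not_le.mpr (Phi_pos_bot hw hT (not_le.mp hc)))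

lemma Astar_ub (hT : 0 < T) : Astar w c ≤ 1 + ∑ t, |c t| :=
  (Astar_le_iff hw hT).mpr (Phi_nonpos_top hw)

lemma Astar_abs (hT : 0 < T) : |Astar w c| ≤ 1 + ∑ t, |c t| := by
  rw [abs_le]
  refine ⟨?_, Astar_ub hw hT⟩
  have h1 : (0:ℝ) ≤ ∑ t, |c t| := Finset.sum_nonneg fun t _ => abs_nonneg _
  linarith [Astar_lb hw hT (c := c)]

lemma Phi_Astar (hT : 0 < T) : Phi w c (Astar w c) = 0 := by
  have hmem : Phi w c (Astar w c) ≤ 0 := by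
    have hclosed : IsClosed {a | Phi w c a ≤ 0} :=
      isClosed_le (Phi_cont hw) continuous_const
    exact hclosed.csInf_mem (Astar_set_nonempty hw) (Astar_set_bdd hw hT)
  refine le_antisymm hmem ?_
  by_contra hlt
  push_neg at hlt
  have hcont : ContinuousAt (fun a => Phi w c a) (Astar w c) := (Phi_cont hw).continuousAt
  have hev : ∀ᶠ a in nhds (Astar w c), Phi w c a < 0 :=
    hcont.eventually_lt continuousAt_const hlt
  have hev' : ∀ᶠ a in nhdsWithin (Astar w c) (Set.Iio (Astar w c)), Phi w c a < 0 :=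
    hev.filter_mono nhdsWithin_le_nhds
  obtain ⟨a, ha, hmem'⟩ := (hev'.and self_mem_nhdsWithin).exists
  have := csInf_le (Astar_set_bdd hw hT) (le_of_lt ha : Phi w c a ≤ 0)
  exact absurd this (not_le.mpr hmem')

lemma Astar_isMin (hT : 0 < T) (a : ℝ) : Gs w c (Astar w c) ≤ Gs w c a := by
  have h := Phi_Astar hw hT (c := c)
  have hsum : ∀ t ∈ Finset.univ,
      gg (w t) (Astar w c + c t) - xm (w t) (Astar w c + c t) * (a - Astar w c)
        ≤ gg (w t) (a + c t) := by
    intro t _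
    have := key1 (hw t) (Astar w c + c t) (a + c t)
    have heq : a + c t - (Astar w c + c t) = a - Astar w c := by ring
    rwa [heq] at this
  have := Finset.sum_le_sum hsum
  rw [Finset.sum_sub_distrib, ← Finset.sum_mul] at this
  unfold Gs Phi at *
  rw [h] at this
  linarith

end PhiLemmas
lemma gg_convex {w : ℝ} (hw : w = 0 ∨ w = 1) {θ : ℝ} (h0 : 0 ≤ θ) (h1 : θ ≤ 1) (u u' : ℝ) :
    gg w (θ * u + (1 - θ) * u') ≤ θ * gg w u + (1 - θ) * gg w u' := by
  have k1 := key1 hw (θ * u + (1 - θ) * u') u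
  have k2 := key1 hw (θ * u + (1 - θ) * u') u'
  nlinarith [mul_le_mul_of_nonneg_left k1 h0,
    mul_le_mul_of_nonneg_left k2 (by linarith : (0:ℝ) ≤ 1 - θ)]

lemma xm_measurable_comp {α : Type*} {m : MeasurableSpace α} {wf uf : α → ℝ}
    (hwm : Measurable wf) (hum : Measurable uf) :
    Measurable fun x => xm (wf x) (uf x) := by
  unfold xm
  apply Measurable.mul (hwm.sub hum)
  apply Measurable.sub measurable_const
  apply hwm.mul
  exact Measurable.ite (measurableSet_le (hwm.sub hum) measurable_const)
    measurable_const measurable_const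

lemma gg_measurable_comp {α : Type*} {m : MeasurableSpace α} {wf uf : α → ℝ}
    (hwm : Measurable wf) (hum : Measurable uf) :
    Measurable fun x => gg (wf x) (uf x) := by
  unfold gg
  apply Measurable.add
  · exact ((measurable_const.sub hwm).mul (((hum.pow_const 2)).div_const 2))
  · exact hwm.mul ((((measurable_const.sub hum).max measurable_const).pow_const 2).div_const 2)

lemma Astar_measurable {α : Type*} {m : MeasurableSpace α} {T : ℕ} (hT : 0 < T)
    {w c : α → Fin T → ℝ} (hw : ∀ x t, w x t = 0 ∨ w x t = 1)
    (hwm : Measurable w) (hcm : Measurable c) :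
    Measurable fun x => Astar (w x) (c x) := by
  apply measurable_of_Iic
  intro r
  have hset : (fun x => Astar (w x) (c x)) ⁻¹' Set.Iic r = {x | Phi (w x) (c x) r ≤ 0} := by
    ext x
    simp only [Set.mem_preimage, Set.mem_Iic, Set.mem_setOf_eq]
    exact Astar_le_iff (hw x) hT
  rw [hset]
  have hPhi : Measurable fun x => Phi (w x) (c x) r := by
    unfold Phi
    apply Finset.measurable_sum
    intro t _
    exact xm_measurable_comp (hwm.eval) ((measurable_const.add (hcm.eval)))
  exact measurableSet_le hPhi measurable_const

lemma Gs_measurable {α : Type*} {m : MeasurableSpace α} {T : ℕ}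
    {w c : α → Fin T → ℝ} {A : α → ℝ}
    (hwm : Measurable w) (hcm : Measurable c) (hAm : Measurable A) :
    Measurable fun x => Gs (w x) (c x) (A x) := by
  unfold Gs
  apply Finset.measurable_sum
  intro t _
  exact gg_measurable_comp (hwm.eval) (hAm.add (hcm.eval))

set_option maxHeartbeats 4000000 in
/-- **Lemma 3 (Existence of oracle balancing parameters).**
Let `(W, X) ∼ 𝒫` with `W ∈ {0,1}^T`, and let `S = S(W,X)` be a statistic such
that `W̄ = (1/T)·Σ_t W_t` is `σ(S,X)`-measurable.  Suppose
`E[W_t | S, X] ≤ 1 − η` a.s. for all `t` (some `η > 0`) and that the covariate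
functions `ψ_t = ψ(X, S, t)` are bounded and measurable.  Then there exist a
`σ(W,X)`-measurable random variable `α*` and `γ* ∈ ℝ^p` such that, with
`ξ_t = W_t − α* − ψ_tᵀγ*` and `m_t = 1 − W_t·1{ξ_t ≤ 0}`,
`E[Σ_t ξ_t ψ_t m_t] = 0` (in `ℝ^p`) and `Σ_t ξ_t m_t = 0` a.s. -/
theorem oracle_weights_exist
    {Ωs 𝒳 𝕊 : Type*} [MeasurableSpace Ωs] [MeasurableSpace 𝒳] [MeasurableSpace 𝕊]
    (μ : Measure Ωs) [IsProbabilityMeasure μ]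
    (T p : ℕ) (hT : 0 < T)
    (W : Ωs → Fin T → ℝ) (hWmeas : Measurable W)
    (hW01 : ∀ ω t, W ω t = 0 ∨ W ω t = 1)
    (X : Ωs → 𝒳) (hX : Measurable X)
    -- the statistic S, a measurable function of (W, X)
    (S : Ωs → 𝕊) (hS : Measurable S)
    (hSstat : @Measurable Ωs 𝕊
      (MeasurableSpace.comap (fun ω => (W ω, X ω)) inferInstance) _ S)
    -- W̄ is σ(S, X)-measurable
    (hWbar : @Measurable Ωs ℝ
      (MeasurableSpace.comap (fun ω => (S ω, X ω)) inferInstance) _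
      (fun ω => (1 / (T : ℝ)) * ∑ t, W ω t))
    -- overlap: E[W_t | S, X] ≤ 1 − η a.s.
    (η : ℝ) (hη : 0 < η)
    (hoverlap : ∀ t, ∀ᵐ ω ∂μ,
      (μ[(fun ω' => W ω' t) |
        MeasurableSpace.comap (fun ω'' => (S ω'', X ω'')) inferInstance]) ω ≤ 1 - η)
    -- bounded measurable covariate functions ψ_t = ψ(X, S, t)
    (ψ : Fin T → 𝕊 × 𝒳 → Fin p → ℝ)
    (hψmeas : ∀ t, Measurable (ψ t))
    (Cψ : ℝ) (hψbdd : ∀ t x j, |ψ t x j| ≤ Cψ) :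
    ∃ (αstar : Ωs → ℝ) (γstar : Fin p → ℝ),
      @Measurable Ωs ℝ
        (MeasurableSpace.comap (fun ω => (W ω, X ω)) inferInstance) _ αstar ∧
      (∀ j, ∫ ω, (∑ t,
          (W ω t - αstar ω - ∑ j', ψ t (S ω, X ω) j' * γstar j') *
            ψ t (S ω, X ω) j *
            (1 - W ω t *
              (if W ω t - αstar ω - ∑ j', ψ t (S ω, X ω) j' * γstar j' ≤ 0
                then (1 : ℝ) else 0))) ∂μ = 0) ∧
      (∀ᵐ ω ∂μ, ∑ t,
          (W ω t - αstar ω - ∑ j', ψ t (S ω, X ω) j' * γstar j') *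
            (1 - W ω t *
              (if W ω t - αstar ω - ∑ j', ψ t (S ω, X ω) j' * γstar j' ≤ 0
                then (1 : ℝ) else 0)) = 0) := by
  classical
  -- abbreviations
  obtain ⟨cf, hcfapp⟩ : ∃ cf : (Fin p → ℝ) → Ωs → Fin T → ℝ,
      ∀ γ ω t, cf γ ω t = ∑ j, ψ t (S ω, X ω) j * γ j := ⟨_, fun _ _ _ => rfl⟩
  obtain ⟨Af, hAfapp⟩ : ∃ Af : (Fin p → ℝ) → Ωs → ℝ,
      ∀ γ ω, Af γ ω = Astar (W ω) (cf γ ω) := ⟨_, fun _ _ => rfl⟩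
  obtain ⟨vf, hvfapp⟩ : ∃ vf : (Fin p → ℝ) → Ωs → ℝ,
      ∀ γ ω, vf γ ω = Gs (W ω) (cf γ ω) (Af γ ω) := ⟨_, fun _ _ => rfl⟩
  obtain ⟨Vf, hVfapp⟩ : ∃ Vf : (Fin p → ℝ) → ℝ,
      ∀ γ, Vf γ = ∫ ω, vf γ ω ∂μ := ⟨_, fun _ => rfl⟩
  set Cψ' : ℝ := max Cψ 0 with hCψ'def
  obtain ⟨Cb, hCbapp⟩ : ∃ Cb : (Fin p → ℝ) → ℝ,
      ∀ γ, Cb γ = ∑ j, Cψ' * |γ j| := ⟨_, fun _ => rfl⟩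
  have hψbdd' : ∀ t x j, |ψ t x j| ≤ Cψ' := fun t x j => (hψbdd t x j).trans (le_max_left _ _)
  have hCψ'0 : (0:ℝ) ≤ Cψ' := le_max_right _ _
  have hmSle : MeasurableSpace.comap (fun ω => (S ω, X ω)) inferInstance
      ≤ (inferInstance : MeasurableSpace Ωs) := (hS.prodMk hX).comap_le
  -- basic bounds
  have hCbnn : ∀ γ, 0 ≤ Cb γ := by
    intro γ; rw [hCbapp]
    exact Finset.sum_nonneg fun j _ => mul_nonneg hCψ'0 (abs_nonneg _)
  have hcbd : ∀ γ ω t, |cf γ ω t| ≤ Cb γ := by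
    intro γ ω t; rw [hcfapp, hCbapp]
    refine (Finset.abs_sum_le_sum_abs _ _).trans (Finset.sum_le_sum fun j _ => ?_)
    rw [abs_mul]
    exact mul_le_mul_of_nonneg_right (hψbdd' t _ j) (abs_nonneg _)
  have hsumc : ∀ γ ω, ∑ t, |cf γ ω t| ≤ (T:ℝ) * Cb γ := by
    intro γ ω
    calc ∑ t, |cf γ ω t| ≤ ∑ _t : Fin T, Cb γ :=
          Finset.sum_le_sum fun t _ => hcbd γ ω t
    _ = (T:ℝ) * Cb γ := by
          rw [Finset.sum_const, Finset.card_univ, Fintype.card_fin, nsmul_eq_mul]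
  have hcmeas : ∀ γ, Measurable (cf γ) := by
    intro γ
    apply measurable_pi_lambda
    intro t
    have : (fun ω => cf γ ω t) = fun ω => ∑ j, ψ t (S ω, X ω) j * γ j :=
      funext fun ω => hcfapp γ ω t
    rw [this]
    exact Finset.measurable_sum _ fun j _ =>
      ((hψmeas t).eval.comp (hS.prodMk hX)).mul_const _
  have hAmeas : ∀ γ, Measurable (Af γ) := by
    intro γ
    have : Af γ = fun ω => Astar (W ω) (cf γ ω) := funext fun ω => hAfapp γ ω
    rw [this]
    exact Astar_measurable hT hW01 hWmeas (hcmeas γ)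
  have hAbd : ∀ γ ω, |Af γ ω| ≤ 1 + (T:ℝ) * Cb γ := by
    intro γ ω
    rw [hAfapp]
    exact (Astar_abs (hW01 ω) hT).trans (by linarith [hsumc γ ω])
  have hvnn : ∀ γ ω, 0 ≤ vf γ ω := by
    intro γ ω
    rw [hvfapp]; unfold Gs
    exact Finset.sum_nonneg fun t _ => gg_nonneg (hW01 ω t) _
  have hvbd : ∀ γ ω, vf γ ω ≤ (T:ℝ) * (1 + (1 + (T:ℝ) * Cb γ + Cb γ))^2 / 2 := by
    intro γ ω
    rw [hvfapp]; unfold Gs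
    have hterm : ∀ t : Fin T, gg (W ω t) (Af γ ω + cf γ ω t)
        ≤ (1 + (1 + (T:ℝ) * Cb γ + Cb γ))^2 / 2 := by
      intro t
      refine (gg_bound (hW01 ω t) _).trans ?_
      have h1 : |Af γ ω + cf γ ω t| ≤ 1 + (T:ℝ) * Cb γ + Cb γ := by
        refine (abs_add_le _ _).trans ?_
        linarith [hAbd γ ω, hcbd γ ω t]
      have h2 : (0:ℝ) ≤ 1 + |Af γ ω + cf γ ω t| := by positivity
      nlinarith [abs_nonneg (Af γ ω + cf γ ω t)]
    calc ∑ t, gg (W ω t) (Af γ ω + cf γ ω t)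
        ≤ ∑ _t : Fin T, (1 + (1 + (T:ℝ) * Cb γ + Cb γ))^2 / 2 :=
          Finset.sum_le_sum fun t _ => hterm t
    _ = (T:ℝ) * (1 + (1 + (T:ℝ) * Cb γ + Cb γ))^2 / 2 := by
          rw [Finset.sum_const, Finset.card_univ, Fintype.card_fin, nsmul_eq_mul]; ring
  have hvmeas : ∀ γ, Measurable (vf γ) := by
    intro γ
    have : vf γ = fun ω => Gs (W ω) (cf γ ω) (Af γ ω) := funext fun ω => hvfapp γ ω
    rw [this]
    exact Gs_measurable hWmeas (hcmeas γ) (hAmeas γ)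
  have hvint : ∀ γ, Integrable (vf γ) μ := by
    intro γ
    refine (integrable_const ((T:ℝ) * (1 + (1 + (T:ℝ) * Cb γ + Cb γ))^2 / 2)).mono'
      (hvmeas γ).aestronglyMeasurable (Filter.Eventually.of_forall fun ω => ?_)
    rw [Real.norm_eq_abs, abs_of_nonneg (hvnn γ ω)]
    exact hvbd γ ω
  have hVnn : ∀ γ, 0 ≤ Vf γ := by
    intro γ
    rw [hVfapp]
    exact integral_nonneg fun ω => hvnn γ ω
  -- linearity of cf
  have hadd : ∀ γ γ' ω t, cf (γ + γ') ω t = cf γ ω t + cf γ' ω t := by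
    intro γ γ' ω t
    simp only [hcfapp, Pi.add_apply, mul_add, Finset.sum_add_distrib]
  have hsmul : ∀ (s:ℝ) (γ : Fin p → ℝ) (ω : Ωs) (t : Fin T), cf (s • γ) ω t = s * cf γ ω t := by
    intro s γ ω t
    simp only [hcfapp, Pi.smul_apply, smul_eq_mul, Finset.mul_sum]
    exact Finset.sum_congr rfl fun j _ => by ring
  have hsub : ∀ (γ γ' : Fin p → ℝ) ω t, cf (γ' - γ) ω t = cf γ' ω t - cf γ ω t := by
    intro γ γ' ω t
    have : γ' - γ = γ' + (-1:ℝ) • γ := by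
      funext j; simp [sub_eq_add_neg]
    rw [this, hadd, hsmul]; ring
  have hsingle : ∀ γ (s:ℝ) j ω t,
      cf (γ + s • (Pi.single j 1 : Fin p → ℝ)) ω t = cf γ ω t + s * ψ t (S ω, X ω) j := by
    intro γ s j ω t
    rw [hadd, hsmul]
    congr 1
    have : cf (Pi.single j 1 : Fin p → ℝ) ω t = ψ t (S ω, X ω) j := by
      rw [hcfapp]
      simp [Pi.single_apply, mul_ite]
    rw [this]
  -- minimality and first-order condition
  have hmin : ∀ γ ω a, vf γ ω ≤ Gs (W ω) (cf γ ω) a := by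
    intro γ ω a
    rw [hvfapp, hAfapp]
    exact Astar_isMin (hW01 ω) hT a
  have hPhi0 : ∀ γ ω, Phi (W ω) (cf γ ω) (Af γ ω) = 0 := by
    intro γ ω
    rw [hAfapp]
    exact Phi_Astar (hW01 ω) hT
  -- comparison estimate and continuity
  have hVlip : ∀ γ γ', Vf γ' ≤ Vf γ + ((T:ℝ) * (2 + (T:ℝ) * Cb γ + Cb γ)) * Cb (γ' - γ)
      + (T:ℝ) * Cb (γ' - γ)^2 / 2 := by
    intro γ γ'
    have hpt : ∀ ω, vf γ' ω ≤ vf γ ω +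
        (((T:ℝ) * (2 + (T:ℝ) * Cb γ + Cb γ)) * Cb (γ' - γ) + (T:ℝ) * Cb (γ' - γ)^2 / 2) := by
      intro ω
      have hterm : ∀ t : Fin T, gg (W ω t) (Af γ ω + cf γ' ω t) ≤
          gg (W ω t) (Af γ ω + cf γ ω t)
            + ((2 + (T:ℝ) * Cb γ + Cb γ) * Cb (γ' - γ) + Cb (γ' - γ)^2 / 2) := by
        intro t
        have e1 : Af γ ω + cf γ' ω t = (Af γ ω + cf γ ω t) + cf (γ' - γ) ω t := by
          rw [hsub]; ring
        rw [e1]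
        have k2 := key2 (hW01 ω t) (Af γ ω + cf γ ω t) (cf (γ' - γ) ω t)
        have h1 : |xm (W ω t) (Af γ ω + cf γ ω t)| ≤ 1 + |Af γ ω + cf γ ω t| :=
          xm_abs (hW01 ω t) _
        have h2 : |cf (γ' - γ) ω t| ≤ Cb (γ' - γ) := hcbd _ ω t
        have h3 : |Af γ ω + cf γ ω t| ≤ 1 + (T:ℝ) * Cb γ + Cb γ :=
          (abs_add_le _ _).trans (by linarith [hAbd γ ω, hcbd γ ω t])
        have h4 : -(xm (W ω t) (Af γ ω + cf γ ω t) * cf (γ' - γ) ω t)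
            ≤ (2 + (T:ℝ) * Cb γ + Cb γ) * Cb (γ' - γ) := by
          calc -(xm (W ω t) (Af γ ω + cf γ ω t) * cf (γ' - γ) ω t)
              ≤ |xm (W ω t) (Af γ ω + cf γ ω t) * cf (γ' - γ) ω t| := neg_le_abs _
          _ = |xm (W ω t) (Af γ ω + cf γ ω t)| * |cf (γ' - γ) ω t| := abs_mul _ _
          _ ≤ (2 + (T:ℝ) * Cb γ + Cb γ) * Cb (γ' - γ) :=
              mul_le_mul (by linarith) h2 (abs_nonneg _)
                (by nlinarith [hCbnn γ, mul_nonneg ((Nat.cast_nonneg T : (0:ℝ) ≤ T)) (hCbnn γ)])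
        have h5 : (cf (γ' - γ) ω t)^2 ≤ Cb (γ' - γ)^2 := by
          nlinarith [abs_nonneg (cf (γ' - γ) ω t), sq_abs (cf (γ' - γ) ω t)]
        linarith
      have e0 : vf γ' ω ≤ Gs (W ω) (cf γ' ω) (Af γ ω) := hmin γ' ω _
      refine e0.trans ?_
      unfold Gs
      calc ∑ t, gg (W ω t) (Af γ ω + cf γ' ω t)
          ≤ ∑ t, (gg (W ω t) (Af γ ω + cf γ ω t)
            + ((2 + (T:ℝ) * Cb γ + Cb γ) * Cb (γ' - γ) + Cb (γ' - γ)^2 / 2)) :=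
            Finset.sum_le_sum fun t _ => hterm t
      _ = (∑ t, gg (W ω t) (Af γ ω + cf γ ω t))
            + (T:ℝ) * ((2 + (T:ℝ) * Cb γ + Cb γ) * Cb (γ' - γ) + Cb (γ' - γ)^2 / 2) := by
            rw [Finset.sum_add_distrib, Finset.sum_const, Finset.card_univ,
              Fintype.card_fin, nsmul_eq_mul]
      _ = vf γ ω + (((T:ℝ) * (2 + (T:ℝ) * Cb γ + Cb γ)) * Cb (γ' - γ)
            + (T:ℝ) * Cb (γ' - γ)^2 / 2) := by
            rw [hvfapp]; unfold Gs; ring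
    rw [hVfapp, hVfapp]
    calc ∫ ω, vf γ' ω ∂μ
        ≤ ∫ ω, (vf γ ω + (((T:ℝ) * (2 + (T:ℝ) * Cb γ + Cb γ)) * Cb (γ' - γ)
          + (T:ℝ) * Cb (γ' - γ)^2 / 2)) ∂μ :=
          integral_mono (hvint γ') ((hvint γ).add (integrable_const _)) hpt
    _ = (∫ ω, vf γ ω ∂μ) + (((T:ℝ) * (2 + (T:ℝ) * Cb γ + Cb γ)) * Cb (γ' - γ)
          + (T:ℝ) * Cb (γ' - γ)^2 / 2) := by
          rw [integral_add (hvint γ) (integrable_const _), integral_const, probReal_univ, one_smul]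
    _ = _ := by ring
  have hCbcont : Continuous Cb := by
    have : Cb = fun γ => ∑ j, Cψ' * |γ j| := funext hCbapp
    rw [this]
    exact continuous_finset_sum _ fun j _ => continuous_const.mul (continuous_apply j).abs
  have hVcont : Continuous Vf := by
    rw [continuous_iff_continuousAt]
    intro γ₀
    have hsym : ∀ γ', Cb (γ₀ - γ') = Cb (γ' - γ₀) := by
      intro γ'
      rw [hCbapp, hCbapp]
      exact Finset.sum_congr rfl fun j _ => by
        rw [Pi.sub_apply, Pi.sub_apply, abs_sub_comm]
    have hFb : ∀ γ', |Vf γ' - Vf γ₀| ≤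
        ((T:ℝ) * (2 + (T:ℝ) * Cb γ₀ + Cb γ₀) + (T:ℝ) * (2 + (T:ℝ) * Cb γ' + Cb γ'))
          * Cb (γ' - γ₀) + (T:ℝ) * Cb (γ' - γ₀)^2 := by
      intro γ'
      have h1 := hVlip γ₀ γ'
      have h2 := hVlip γ' γ₀
      rw [hsym γ'] at h2
      have hc1 := hCbnn (γ' - γ₀)
      have hc2 := hCbnn γ₀
      have hc3 := hCbnn γ'
      have hT0 : (0:ℝ) ≤ (T:ℝ) := Nat.cast_nonneg _
      have hP0 : 0 ≤ (T:ℝ) * (2 + (T:ℝ) * Cb γ₀ + Cb γ₀) :=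
        mul_nonneg hT0 (by nlinarith [mul_nonneg hT0 hc2])
      have hP1 : 0 ≤ (T:ℝ) * (2 + (T:ℝ) * Cb γ' + Cb γ') :=
        mul_nonneg hT0 (by nlinarith [mul_nonneg hT0 hc3])
      rw [abs_le]
      constructor <;>
        nlinarith [mul_nonneg hP0 hc1, mul_nonneg hP1 hc1,
          mul_nonneg hT0 (sq_nonneg (Cb (γ' - γ₀)))]
    have hFcont : Continuous (fun γ' =>
        ((T:ℝ) * (2 + (T:ℝ) * Cb γ₀ + Cb γ₀) + (T:ℝ) * (2 + (T:ℝ) * Cb γ' + Cb γ'))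
          * Cb (γ' - γ₀) + (T:ℝ) * Cb (γ' - γ₀)^2) := by
      have hC2 : Continuous (fun γ' : Fin p → ℝ => Cb (γ' - γ₀)) :=
        hCbcont.comp (continuous_id.sub continuous_const)
      exact ((continuous_const.add (continuous_const.mul
        (((continuous_const.add (continuous_const.mul hCbcont)).add hCbcont)))).mul hC2).add
        (continuous_const.mul (hC2.pow 2))
    have hF0 : ((T:ℝ) * (2 + (T:ℝ) * Cb γ₀ + Cb γ₀) + (T:ℝ) * (2 + (T:ℝ) * Cb γ₀ + Cb γ₀))
          * Cb (γ₀ - γ₀) + (T:ℝ) * Cb (γ₀ - γ₀)^2 = 0 := by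
      have : Cb (γ₀ - γ₀) = 0 := by
        rw [sub_self, hCbapp]; simp
      rw [this]; ring
    have hsq : Filter.Tendsto (fun γ' =>
        ((T:ℝ) * (2 + (T:ℝ) * Cb γ₀ + Cb γ₀) + (T:ℝ) * (2 + (T:ℝ) * Cb γ' + Cb γ'))
          * Cb (γ' - γ₀) + (T:ℝ) * Cb (γ' - γ₀)^2) (nhds γ₀) (nhds 0) := by
      have := hFcont.tendsto γ₀
      rwa [hF0] at this
    rw [ContinuousAt, tendsto_iff_dist_tendsto_zero]
    refine squeeze_zero (fun γ' => dist_nonneg) (fun γ' => ?_) hsq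
    rw [Real.dist_eq]
    exact hFb γ'
  have hconv : ∀ (γ₁ γ₂ : Fin p → ℝ) (θ:ℝ), 0 ≤ θ → θ ≤ 1 →
      Vf (θ • γ₁ + (1 - θ) • γ₂) ≤ θ * Vf γ₁ + (1 - θ) * Vf γ₂ := by
    intro γ₁ γ₂ θ h0 h1
    have hpt : ∀ ω, vf (θ • γ₁ + (1 - θ) • γ₂) ω ≤ θ * vf γ₁ ω + (1 - θ) * vf γ₂ ω := by
      intro ω
      have hmix : ∀ t, cf (θ • γ₁ + (1 - θ) • γ₂) ω t
          = θ * cf γ₁ ω t + (1 - θ) * cf γ₂ ω t := fun t => by rw [hadd, hsmul, hsmul]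
      have e0 : vf (θ • γ₁ + (1 - θ) • γ₂) ω ≤ Gs (W ω) (cf (θ • γ₁ + (1 - θ) • γ₂) ω)
          (θ * Af γ₁ ω + (1 - θ) * Af γ₂ ω) := hmin _ ω _
      refine e0.trans ?_
      unfold Gs
      calc ∑ t, gg (W ω t) (θ * Af γ₁ ω + (1 - θ) * Af γ₂ ω
              + cf (θ • γ₁ + (1 - θ) • γ₂) ω t)
          ≤ ∑ t, (θ * gg (W ω t) (Af γ₁ ω + cf γ₁ ω t)
              + (1 - θ) * gg (W ω t) (Af γ₂ ω + cf γ₂ ω t)) := by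
            refine Finset.sum_le_sum fun t _ => ?_
            have harg : θ * Af γ₁ ω + (1 - θ) * Af γ₂ ω + cf (θ • γ₁ + (1 - θ) • γ₂) ω t
                = θ * (Af γ₁ ω + cf γ₁ ω t) + (1 - θ) * (Af γ₂ ω + cf γ₂ ω t) := by
              rw [hmix t]; ring
            rw [harg]
            exact gg_convex (hW01 ω t) h0 h1 _ _
      _ = θ * vf γ₁ ω + (1 - θ) * vf γ₂ ω := by
            rw [hvfapp, hvfapp]; unfold Gs
            rw [Finset.sum_add_distrib, Finset.mul_sum, Finset.mul_sum]
    rw [hVfapp, hVfapp, hVfapp]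
    calc ∫ ω, vf (θ • γ₁ + (1 - θ) • γ₂) ω ∂μ
        ≤ ∫ ω, (θ * vf γ₁ ω + (1 - θ) * vf γ₂ ω) ∂μ :=
          integral_mono (hvint _) (((hvint γ₁).const_mul θ).add
            ((hvint γ₂).const_mul (1 - θ))) hpt
    _ = θ * (∫ ω, vf γ₁ ω ∂μ) + (1 - θ) * (∫ ω, vf γ₂ ω ∂μ) := by
          rw [integral_add ((hvint γ₁).const_mul θ) ((hvint γ₂).const_mul (1 - θ)),
            integral_const_mul, integral_const_mul]
  -- invariance along common-shift directions
  have hLshift : ∀ γ d, (∀ t t' : Fin T, (fun ω => cf d ω t) =ᵐ[μ] fun ω => cf d ω t') →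
      Vf (γ + d) = Vf γ := by
    intro γ d hd
    have hae : ∀ᵐ ω ∂μ, ∀ t t' : Fin T, cf d ω t = cf d ω t' :=
      ae_all_iff.mpr fun t => ae_all_iff.mpr fun t' =>
        (hd t t' : _).mono fun ω h => h
    rw [hVfapp, hVfapp]
    refine integral_congr_ae ?_
    filter_upwards [hae] with ω hω
    have hcd : ∀ t, cf (γ + d) ω t = cf γ ω t + cf d ω ⟨0, hT⟩ := fun t => by
      rw [hadd, hω t ⟨0, hT⟩]
    have e1 : Gs (W ω) (cf (γ + d) ω) (Af γ ω - cf d ω ⟨0, hT⟩) = vf γ ω := by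
      rw [hvfapp]; unfold Gs
      refine Finset.sum_congr rfl fun t _ => ?_
      rw [hcd t]; congr 1; ring
    have e2 : Gs (W ω) (cf γ ω) (Af (γ + d) ω + cf d ω ⟨0, hT⟩) = vf (γ + d) ω := by
      rw [hvfapp]; unfold Gs
      refine Finset.sum_congr rfl fun t _ => ?_
      rw [hcd t]; congr 1; ring
    have h1 : vf (γ + d) ω ≤ vf γ ω := e1 ▸ hmin (γ + d) ω _
    have h2 : vf γ ω ≤ vf (γ + d) ω := e2 ▸ hmin γ ω _
    exact le_antisymm h1 h2
  -- bounded rays are common-shift directions (uses overlap)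
  have hdir : ∀ d : Fin p → ℝ, (∀ s : ℝ, 0 ≤ s → Vf (s • d) ≤ Vf 0) →
      ∀ t t' : Fin T, (fun ω => cf d ω t) =ᵐ[μ] fun ω => cf d ω t' := by
    intro d hray
    -- if an integral is ≤ 4·V0/s² for all s > 0, it is ≤ 0
    have hsmallint : ∀ I : ℝ, (∀ s : ℝ, 0 < s → s^2 * I ≤ 4 * Vf 0) → I ≤ 0 := by
      intro I hI
      by_contra hcon
      push_neg at hcon
      have hV0 := hVnn 0
      have hs1 : (1:ℝ) ≤ max 1 ((4 * Vf 0 + 1)/I) := le_max_left _ _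
      have hs2 : (4 * Vf 0 + 1)/I ≤ max 1 ((4 * Vf 0 + 1)/I) := le_max_right _ _
      have hsI : 4 * Vf 0 + 1 ≤ (max 1 ((4 * Vf 0 + 1)/I)) * I := by
        calc 4 * Vf 0 + 1 = ((4 * Vf 0 + 1)/I) * I :=
              (div_mul_cancel₀ _ (ne_of_gt hcon)).symm
        _ ≤ (max 1 ((4 * Vf 0 + 1)/I)) * I := mul_le_mul_of_nonneg_right hs2 hcon.le
      have h3 := hI (max 1 ((4 * Vf 0 + 1)/I)) (by linarith)
      nlinarith [mul_le_mul_of_nonneg_left hsI (by linarith : (0:ℝ) ≤ max 1 ((4 * Vf 0 + 1)/I))]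
    -- extracting two terms of the sum defining vf
    have htwo : ∀ (γ : Fin p → ℝ) ω (t t' : Fin T), t ≠ t' →
        gg (W ω t) (Af γ ω + cf γ ω t) + gg (W ω t') (Af γ ω + cf γ ω t') ≤ vf γ ω := by
      intro γ ω t t' htt
      rw [hvfapp]
      unfold Gs
      have h := Finset.sum_le_sum_of_subset_of_nonneg
        (Finset.subset_univ ({t, t'} : Finset (Fin T)))
        (fun i _ _ => gg_nonneg (hW01 ω i) (Af γ ω + cf γ ω i))
      rwa [Finset.sum_pair htt] at h
    -- first a.e. comparison: both untreated forces equality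
    have hq1 : ∀ t t' : Fin T, t ≠ t' →
        ∀ᵐ ω ∂μ, W ω t = 0 → W ω t' = 0 → cf d ω t = cf d ω t' := by
      intro t t' htt
      have hqm : Measurable (fun ω =>
          if W ω t = 0 ∧ W ω t' = 0 then (cf d ω t - cf d ω t')^2 else (0:ℝ)) := by
        refine Measurable.ite ?_ (((((hcmeas d).eval).sub ((hcmeas d).eval)).pow_const 2))
          measurable_const
        exact (hWmeas.eval (measurableSet_singleton 0)).inter
          (hWmeas.eval (measurableSet_singleton 0))
      have hqnn : ∀ ω, 0 ≤ (if W ω t = 0 ∧ W ω t' = 0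
          then (cf d ω t - cf d ω t')^2 else (0:ℝ)) := by
        intro ω; split_ifs <;> positivity
      have hqint : Integrable (fun ω =>
          if W ω t = 0 ∧ W ω t' = 0 then (cf d ω t - cf d ω t')^2 else (0:ℝ)) μ := by
        refine (integrable_const ((2 * Cb d)^2)).mono' hqm.aestronglyMeasurable
          (Filter.Eventually.of_forall fun ω => ?_)
        rw [Real.norm_eq_abs, abs_of_nonneg (hqnn ω)]
        split_ifs
        · nlinarith [hcbd d ω t, hcbd d ω t', abs_nonneg (cf d ω t), abs_nonneg (cf d ω t'),
            neg_abs_le (cf d ω t), le_abs_self (cf d ω t),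
            neg_abs_le (cf d ω t'), le_abs_self (cf d ω t')]
        · positivity
      have hkey : ∀ s : ℝ, 0 < s → s^2 * (∫ ω,
          (if W ω t = 0 ∧ W ω t' = 0 then (cf d ω t - cf d ω t')^2 else (0:ℝ)) ∂μ)
          ≤ 4 * Vf 0 := by
        intro s hs
        have hpt : ∀ ω, s^2 * (if W ω t = 0 ∧ W ω t' = 0
            then (cf d ω t - cf d ω t')^2 else (0:ℝ)) ≤ 4 * vf (s • d) ω := by
          intro ω
          split_ifs with hcase
          · obtain ⟨h0, h0'⟩ := hcase
            have h2 := htwo (s • d) ω t t' htt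
            rw [h0, h0', gg_zero, gg_zero, hsmul, hsmul] at h2
            nlinarith [sq_nonneg ((Af (s • d) ω + s * cf d ω t)
              + (Af (s • d) ω + s * cf d ω t'))]
          · have := hvnn (s • d) ω
            rw [mul_zero]
            linarith
        have h1 : ∫ ω, s^2 * (if W ω t = 0 ∧ W ω t' = 0
            then (cf d ω t - cf d ω t')^2 else (0:ℝ)) ∂μ ≤ ∫ ω, 4 * vf (s • d) ω ∂μ :=
          integral_mono (hqint.const_mul _) ((hvint _).const_mul _) hpt
        rw [integral_const_mul, integral_const_mul] at h1
        have h2 : (∫ ω, vf (s • d) ω ∂μ) ≤ Vf 0 := by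
          rw [← hVfapp]
          exact hray s hs.le
        nlinarith [(integral_nonneg hqnn : 0 ≤ ∫ ω, (if W ω t = 0 ∧ W ω t' = 0
            then (cf d ω t - cf d ω t')^2 else (0:ℝ)) ∂μ), sq_nonneg s]
      have hq0 : ∫ ω, (if W ω t = 0 ∧ W ω t' = 0
          then (cf d ω t - cf d ω t')^2 else (0:ℝ)) ∂μ = 0 :=
        le_antisymm (hsmallint _ hkey) (integral_nonneg hqnn)
      have hae0 := (integral_eq_zero_iff_of_nonneg hqnn hqint).mp hq0
      filter_upwards [hae0] with ω hω h0 h0'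
      have : (if W ω t = 0 ∧ W ω t' = 0 then (cf d ω t - cf d ω t')^2 else (0:ℝ)) = 0 := hω
      rw [if_pos ⟨h0, h0'⟩] at this
      exact sub_eq_zero.mp (sq_eq_zero_iff.mp this)
    -- second a.e. comparison: untreated vs treated forces inequality
    have hq2 : ∀ t t' : Fin T, t ≠ t' →
        ∀ᵐ ω ∂μ, W ω t = 0 → W ω t' = 1 → cf d ω t ≤ cf d ω t' := by
      intro t t' htt
      have hqm : Measurable (fun ω =>
          if W ω t = 0 ∧ W ω t' = 1 ∧ cf d ω t' < cf d ω t
            then (cf d ω t - cf d ω t')^2 else (0:ℝ)) := by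
        refine Measurable.ite ?_ (((((hcmeas d).eval).sub ((hcmeas d).eval)).pow_const 2))
          measurable_const
        refine (hWmeas.eval (measurableSet_singleton 0)).inter ?_
        exact (hWmeas.eval (measurableSet_singleton 1)).inter
          (measurableSet_lt ((hcmeas d).eval) ((hcmeas d).eval))
      have hqnn : ∀ ω, 0 ≤ (if W ω t = 0 ∧ W ω t' = 1 ∧ cf d ω t' < cf d ω t
          then (cf d ω t - cf d ω t')^2 else (0:ℝ)) := by
        intro ω; split_ifs <;> positivity
      have hqint : Integrable (fun ω =>
          if W ω t = 0 ∧ W ω t' = 1 ∧ cf d ω t' < cf d ω t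
            then (cf d ω t - cf d ω t')^2 else (0:ℝ)) μ := by
        refine (integrable_const ((2 * Cb d)^2)).mono' hqm.aestronglyMeasurable
          (Filter.Eventually.of_forall fun ω => ?_)
        rw [Real.norm_eq_abs, abs_of_nonneg (hqnn ω)]
        split_ifs
        · nlinarith [hcbd d ω t, hcbd d ω t', abs_nonneg (cf d ω t), abs_nonneg (cf d ω t'),
            neg_abs_le (cf d ω t), le_abs_self (cf d ω t),
            neg_abs_le (cf d ω t'), le_abs_self (cf d ω t')]
        · positivity
      have hkey : ∀ s : ℝ, 0 < s → s^2 * (∫ ω,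
          (if W ω t = 0 ∧ W ω t' = 1 ∧ cf d ω t' < cf d ω t
            then (cf d ω t - cf d ω t')^2 else (0:ℝ)) ∂μ) ≤ 4 * Vf 0 := by
        intro s hs
        have hpt : ∀ ω, s^2 * (if W ω t = 0 ∧ W ω t' = 1 ∧ cf d ω t' < cf d ω t
            then (cf d ω t - cf d ω t')^2 else (0:ℝ)) ≤ 4 * vf (s • d) ω := by
          intro ω
          split_ifs with hcase
          · obtain ⟨h0, h0', hlt⟩ := hcase
            have h2 := htwo (s • d) ω t t' htt
            rw [h0, h0', gg_zero, gg_one, hsmul, hsmul] at h2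
            have hδ : 0 < cf d ω t - cf d ω t' := sub_pos.mpr hlt
            have hm1 : (1 + s * (cf d ω t - cf d ω t')) - (Af (s • d) ω + s * cf d ω t)
                ≤ max (1 - (Af (s • d) ω + s * cf d ω t')) 0 := by
              have hK : 1 - (Af (s • d) ω + s * cf d ω t')
                  = (1 + s * (cf d ω t - cf d ω t')) - (Af (s • d) ω + s * cf d ω t) := by
                ring
              rw [← hK]
              exact le_max_left _ _
            have hm0 : 0 ≤ max (1 - (Af (s • d) ω + s * cf d ω t')) 0 := le_max_right _ _
            have hsδ : 0 < s * (cf d ω t - cf d ω t') := mul_pos hs hδ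
            have hxm : 1 + s * (cf d ω t - cf d ω t')
                ≤ (Af (s • d) ω + s * cf d ω t) + max (1 - (Af (s • d) ω + s * cf d ω t')) 0 := by
              linarith
            have hK0 : (0:ℝ) < 1 + s * (cf d ω t - cf d ω t') := by linarith
            have ha : ((Af (s • d) ω + s * cf d ω t)
                + max (1 - (Af (s • d) ω + s * cf d ω t')) 0)^2
                ≤ 2 * ((Af (s • d) ω + s * cf d ω t)^2
                  + (max (1 - (Af (s • d) ω + s * cf d ω t')) 0)^2) := by
              nlinarith [sq_nonneg ((Af (s • d) ω + s * cf d ω t)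
                - max (1 - (Af (s • d) ω + s * cf d ω t')) 0)]
            have hb : (1 + s * (cf d ω t - cf d ω t'))^2
                ≤ ((Af (s • d) ω + s * cf d ω t)
                  + max (1 - (Af (s • d) ω + s * cf d ω t')) 0)^2 := by
              nlinarith [mul_nonneg (sub_nonneg.mpr hxm)
                (by linarith : (0:ℝ) ≤ ((Af (s • d) ω + s * cf d ω t)
                  + max (1 - (Af (s • d) ω + s * cf d ω t')) 0)
                  + (1 + s * (cf d ω t - cf d ω t')))]
            have hc : (s * (cf d ω t - cf d ω t'))^2
                ≤ (1 + s * (cf d ω t - cf d ω t'))^2 := by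
              nlinarith
            have hd2 : (s * (cf d ω t - cf d ω t'))^2
                = s^2 * (cf d ω t - cf d ω t')^2 := by ring
            linarith
          · have := hvnn (s • d) ω
            rw [mul_zero]
            linarith
        have h1 : ∫ ω, s^2 * (if W ω t = 0 ∧ W ω t' = 1 ∧ cf d ω t' < cf d ω t
            then (cf d ω t - cf d ω t')^2 else (0:ℝ)) ∂μ ≤ ∫ ω, 4 * vf (s • d) ω ∂μ :=
          integral_mono (hqint.const_mul _) ((hvint _).const_mul _) hpt
        rw [integral_const_mul, integral_const_mul] at h1
        have h2 : (∫ ω, vf (s • d) ω ∂μ) ≤ Vf 0 := by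
          rw [← hVfapp]
          exact hray s hs.le
        nlinarith [(integral_nonneg hqnn : 0 ≤ ∫ ω, (if W ω t = 0 ∧ W ω t' = 1 ∧ cf d ω t' < cf d ω t
            then (cf d ω t - cf d ω t')^2 else (0:ℝ)) ∂μ), sq_nonneg s]
      have hq0 : ∫ ω, (if W ω t = 0 ∧ W ω t' = 1 ∧ cf d ω t' < cf d ω t
          then (cf d ω t - cf d ω t')^2 else (0:ℝ)) ∂μ = 0 :=
        le_antisymm (hsmallint _ hkey) (integral_nonneg hqnn)
      have hae0 := (integral_eq_zero_iff_of_nonneg hqnn hqint).mp hq0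
      filter_upwards [hae0] with ω hω h0 h0'
      by_contra hlt
      push_neg at hlt
      have : (if W ω t = 0 ∧ W ω t' = 1 ∧ cf d ω t' < cf d ω t
          then (cf d ω t - cf d ω t')^2 else (0:ℝ)) = 0 := hω
      rw [if_pos ⟨h0, h0', hlt⟩] at this
      have := sub_eq_zero.mp (sq_eq_zero_iff.mp this)
      exact absurd this (ne_of_gt hlt)
    -- combine with the overlap condition
    have hpair : ∀ t t' : Fin T, ∀ᵐ ω ∂μ, cf d ω t ≤ cf d ω t' := by
      intro t t'
      rcases eq_or_ne t t' with rfl | htt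
      · exact Filter.Eventually.of_forall fun ω => le_rfl
      have hbm : ∀ τ : Fin T, @Measurable Ωs ℝ
          (MeasurableSpace.comap (fun ω => (S ω, X ω)) inferInstance) _
          (fun ω => cf d ω τ) := by
        intro τ
        have : (fun ω => cf d ω τ) = fun ω => ∑ j, ψ τ (S ω, X ω) j * d j :=
          funext fun ω => hcfapp d ω τ
        rw [this]
        exact Finset.measurable_sum _ fun j _ =>
          ((hψmeas τ).eval.comp (Measurable.of_comap_le le_rfl)).mul_const _
      have hAmS : MeasurableSet[MeasurableSpace.comap (fun ω => (S ω, X ω)) inferInstance]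
          {ω | cf d ω t' < cf d ω t} := measurableSet_lt (hbm t') (hbm t)
      have hAamb : MeasurableSet {ω | cf d ω t' < cf d ω t} := hmSle _ hAmS
      have hWt1 : ∀ᵐ ω ∂μ, ω ∈ {ω | cf d ω t' < cf d ω t} → W ω t = 1 := by
        filter_upwards [hq1 t t' htt, hq2 t t' htt] with ω h1 h2 hmem
        rcases hW01 ω t with h | h
        · exfalso
          rcases hW01 ω t' with h' | h'
          · exact absurd (h1 h h') (ne_of_gt hmem)
          · exact absurd (h2 h h') (not_le.mpr hmem)
        · exact h
      have hWtint : Integrable (fun ω => W ω t) μ := by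
        refine (integrable_const 1).mono' hWmeas.eval.aestronglyMeasurable
          (Filter.Eventually.of_forall fun ω => ?_)
        rcases hW01 ω t with h | h <;> simp [h]
      have hint1 : ∫ ω in {ω | cf d ω t' < cf d ω t}, W ω t ∂μ
          = (μ {ω | cf d ω t' < cf d ω t}).toReal := by
        have he : ∫ ω in {ω | cf d ω t' < cf d ω t}, W ω t ∂μ
            = ∫ _ω in {ω | cf d ω t' < cf d ω t}, (1:ℝ) ∂μ := by
          refine setIntegral_congr_ae hAamb ?_
          filter_upwards [hWt1] with ω h hmem
          rw [h hmem]
        rw [he, setIntegral_const, smul_eq_mul, mul_one, measureReal_def]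
      have hint2 : ∫ ω in {ω | cf d ω t' < cf d ω t}, W ω t ∂μ
          = ∫ ω in {ω | cf d ω t' < cf d ω t},
            (μ[(fun ω' => W ω' t) |
              MeasurableSpace.comap (fun ω'' => (S ω'', X ω'')) inferInstance]) ω ∂μ :=
        (setIntegral_condExp hmSle hWtint hAmS).symm
      have hint3 : ∫ ω in {ω | cf d ω t' < cf d ω t},
            (μ[(fun ω' => W ω' t) |
              MeasurableSpace.comap (fun ω'' => (S ω'', X ω'')) inferInstance]) ω ∂μ
          ≤ ∫ _ω in {ω | cf d ω t' < cf d ω t}, (1 - η) ∂μ := by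
        refine setIntegral_mono_ae_restrict integrable_condExp.integrableOn
          (integrableOn_const (measure_ne_top μ _)) ?_
        exact ae_restrict_of_ae (hoverlap t)
      have hint4 : ∫ _ω in {ω | cf d ω t' < cf d ω t}, (1 - η : ℝ) ∂μ
          = (1 - η) * (μ {ω | cf d ω t' < cf d ω t}).toReal := by
        rw [setIntegral_const, smul_eq_mul, mul_comm, measureReal_def]
      have htr0 : (μ {ω | cf d ω t' < cf d ω t}).toReal = 0 := by
        have h5 : (μ {ω | cf d ω t' < cf d ω t}).toReal
            ≤ (1 - η) * (μ {ω | cf d ω t' < cf d ω t}).toReal := by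
          calc (μ {ω | cf d ω t' < cf d ω t}).toReal
              = ∫ ω in {ω | cf d ω t' < cf d ω t}, W ω t ∂μ := hint1.symm
          _ = ∫ ω in {ω | cf d ω t' < cf d ω t},
                (μ[(fun ω' => W ω' t) |
                  MeasurableSpace.comap (fun ω'' => (S ω'', X ω'')) inferInstance]) ω ∂μ :=
              hint2
          _ ≤ ∫ _ω in {ω | cf d ω t' < cf d ω t}, (1 - η) ∂μ := hint3
          _ = (1 - η) * (μ {ω | cf d ω t' < cf d ω t}).toReal := hint4
        have h6 : 0 ≤ (μ {ω | cf d ω t' < cf d ω t}).toReal := ENNReal.toReal_nonneg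
        nlinarith
      have hA0 : μ {ω | cf d ω t' < cf d ω t} = 0 := by
        rcases (ENNReal.toReal_eq_zero_iff _).mp htr0 with h | h
        · exact h
        · exact absurd h (measure_ne_top μ _)
      have hnm := measure_eq_zero_iff_ae_notMem.mp hA0
      filter_upwards [hnm] with ω h
      exact not_lt.mp h
    intro t t'
    filter_upwards [hpair t t', hpair t' t] with ω h1 h2
    exact le_antisymm h1 h2
  -- the subspace of common-shift directions
  set L : Submodule ℝ (Fin p → ℝ) :=
    { carrier := {d | ∀ t t' : Fin T, (fun ω => cf d ω t) =ᵐ[μ] fun ω => cf d ω t'}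
      add_mem' := by
        intro d d' hd hd' t t'
        filter_upwards [hd t t', hd' t t'] with ω h1 h2
        simp only [hadd, h1, h2]
      zero_mem' := by
        intro t t'
        refine Filter.Eventually.of_forall fun ω => ?_
        simp [hcfapp]
      smul_mem' := by
        intro s d hd t t'
        filter_upwards [hd t t'] with ω h1
        simp only [hsmul, h1] } with hLdef
  obtain ⟨K, hK⟩ := Submodule.exists_isCompl L
  -- bounded sublevel set on K
  have hbdd : ∃ R : ℝ, 0 < R ∧ ∀ γ ∈ K, Vf γ ≤ Vf 0 → ‖γ‖ ≤ R := by
    by_contra hcon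
    push_neg at hcon
    choose γn hγnK hγnV hγnN using fun n : ℕ => hcon ((n:ℝ)+1) (by positivity)
    have hnormpos : ∀ n : ℕ, 0 < ‖γn n‖ := by
      intro n
      have := hγnN n
      have h0 : (0:ℝ) ≤ (n:ℝ) := Nat.cast_nonneg n
      linarith
    have hdnS : ∀ n, ‖γn n‖⁻¹ • γn n ∈ (K : Set (Fin p → ℝ)) ∩ Metric.sphere 0 1 := by
      intro n
      refine ⟨K.smul_mem _ (hγnK n), ?_⟩
      rw [Metric.mem_sphere, dist_zero_right, norm_smul, norm_inv, norm_norm,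
        inv_mul_cancel₀ (ne_of_gt (hnormpos n))]
    have hcpt : IsCompact ((K : Set (Fin p → ℝ)) ∩ Metric.sphere 0 1) :=
      (isCompact_sphere 0 1).inter_left K.closed_of_finiteDimensional
    obtain ⟨d, hdmem, φ, hφmono, hφtend⟩ := hcpt.tendsto_subseq hdnS
    have hray : ∀ s : ℝ, 0 ≤ s → Vf (s • d) ≤ Vf 0 := by
      intro s hs
      have hev : ∀ᶠ n in Filter.atTop, Vf (s • (‖γn (φ n)‖⁻¹ • γn (φ n))) ≤ Vf 0 := by
        filter_upwards [Filter.eventually_ge_atTop ⌈s⌉₊] with n hn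
        have hsn : s ≤ (n:ℝ) + 1 := by
          calc s ≤ (⌈s⌉₊ : ℝ) := Nat.le_ceil s
          _ ≤ (n:ℝ) := by exact_mod_cast hn
          _ ≤ (n:ℝ) + 1 := by linarith
        have hφge : (n:ℝ) ≤ (φ n : ℝ) := by exact_mod_cast hφmono.le_apply
        have h1 : s ≤ ‖γn (φ n)‖ := by
          have h2 := hγnN (φ n)
          linarith
        have hnp := hnormpos (φ n)
        have hθ0 : 0 ≤ s / ‖γn (φ n)‖ := div_nonneg hs (norm_nonneg _)
        have hθ1 : s / ‖γn (φ n)‖ ≤ 1 := by rw [div_le_one hnp]; exact h1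
        have hcv := hconv (γn (φ n)) 0 (s / ‖γn (φ n)‖) hθ0 hθ1
        have heq : (s / ‖γn (φ n)‖) • γn (φ n) + (1 - s / ‖γn (φ n)‖) • (0 : Fin p → ℝ)
            = s • (‖γn (φ n)‖⁻¹ • γn (φ n)) := by
          rw [smul_zero, add_zero, smul_smul, div_eq_mul_inv]
        rw [heq] at hcv
        have hVle := hγnV (φ n)
        have hmul : (s / ‖γn (φ n)‖) * Vf (γn (φ n)) ≤ (s / ‖γn (φ n)‖) * Vf 0 :=
          mul_le_mul_of_nonneg_left hVle hθ0
        calc Vf (s • (‖γn (φ n)‖⁻¹ • γn (φ n)))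
            ≤ (s / ‖γn (φ n)‖) * Vf (γn (φ n)) + (1 - s / ‖γn (φ n)‖) * Vf 0 := hcv
        _ ≤ (s / ‖γn (φ n)‖) * Vf 0 + (1 - s / ‖γn (φ n)‖) * Vf 0 := by linarith
        _ = Vf 0 := by ring
      have htendV : Filter.Tendsto (fun n => Vf (s • (‖γn (φ n)‖⁻¹ • γn (φ n))))
          Filter.atTop (nhds (Vf (s • d))) := by
        have h1 : Filter.Tendsto (fun n => s • (‖γn (φ n)‖⁻¹ • γn (φ n)))
            Filter.atTop (nhds (s • d)) := hφtend.const_smul s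
        exact (hVcont.tendsto (s • d)).comp h1
      exact le_of_tendsto htendV hev
    have hdL : d ∈ L := hdir d hray
    have hdK : d ∈ K := hdmem.1
    have hd0 : d = 0 := (Submodule.disjoint_def.mp hK.disjoint) d hdL hdK
    have hd1 : ‖d‖ = 1 := by
      have := hdmem.2
      rwa [Metric.mem_sphere, dist_zero_right] at this
    rw [hd0, norm_zero] at hd1
    exact zero_ne_one hd1
  obtain ⟨R, hR0, hRb⟩ := hbdd
  -- minimize over K ∩ ball
  have hKBcpt : IsCompact ((K : Set (Fin p → ℝ)) ∩ Metric.closedBall 0 R) :=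
    (isCompact_closedBall 0 R).inter_left K.closed_of_finiteDimensional
  have hKB0 : (0 : Fin p → ℝ) ∈ (K : Set (Fin p → ℝ)) ∩ Metric.closedBall 0 R :=
    ⟨K.zero_mem, Metric.mem_closedBall_self hR0.le⟩
  obtain ⟨γs, hγsKB, hγsmin⟩ := hKBcpt.exists_isMinOn ⟨0, hKB0⟩ hVcont.continuousOn
  have hglobal : ∀ γ, Vf γs ≤ Vf γ := by
    intro γ
    have hγtop : γ ∈ L ⊔ K := by rw [hK.sup_eq_top]; trivial
    obtain ⟨l, hl, k, hk, hlk⟩ := Submodule.mem_sup.mp hγtop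
    have hVk : Vf γ = Vf k := by
      rw [← hlk, add_comm]
      exact hLshift k l hl
    rcases le_or_gt (Vf k) (Vf 0) with h | h
    · have hkB : k ∈ (K : Set (Fin p → ℝ)) ∩ Metric.closedBall 0 R :=
        ⟨hk, by rw [Metric.mem_closedBall, dist_zero_right]; exact hRb k hk h⟩
      rw [hVk]
      exact isMinOn_iff.mp hγsmin k hkB
    · have h0 := isMinOn_iff.mp hγsmin 0 hKB0
      rw [hVk]; linarith
  -- gradient condition
  obtain ⟨Fj, hFjapp⟩ : ∃ Fj : Fin p → Ωs → ℝ, ∀ j ω,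
      Fj j ω = ∑ t, xm (W ω t) (Af γs ω + cf γs ω t) * ψ t (S ω, X ω) j :=
    ⟨_, fun _ _ => rfl⟩
  have hubd : ∀ (γ : Fin p → ℝ) ω (t : Fin T),
      |Af γ ω + cf γ ω t| ≤ 1 + (T:ℝ) * Cb γ + Cb γ := by
    intro γ ω t
    exact (abs_add_le _ _).trans (by linarith [hAbd γ ω, hcbd γ ω t])
  have hFjint : ∀ j, Integrable (Fj j) μ := by
    intro j
    have hFm : Measurable (Fj j) := by
      have : Fj j = fun ω => ∑ t, xm (W ω t) (Af γs ω + cf γs ω t) * ψ t (S ω, X ω) j :=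
        funext fun ω => hFjapp j ω
      rw [this]
      exact Finset.measurable_sum _ fun t _ =>
        (xm_measurable_comp hWmeas.eval ((hAmeas γs).add ((hcmeas γs).eval))).mul
          ((hψmeas t).eval.comp (hS.prodMk hX))
    refine (integrable_const ((T:ℝ) * ((2 + (T:ℝ) * Cb γs + Cb γs) * Cψ'))).mono'
      hFm.aestronglyMeasurable (Filter.Eventually.of_forall fun ω => ?_)
    rw [Real.norm_eq_abs, hFjapp]
    refine (Finset.abs_sum_le_sum_abs _ _).trans ?_
    have hterm : ∀ t : Fin T, |xm (W ω t) (Af γs ω + cf γs ω t) * ψ t (S ω, X ω) j|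
        ≤ (2 + (T:ℝ) * Cb γs + Cb γs) * Cψ' := by
      intro t
      rw [abs_mul]
      refine mul_le_mul ?_ (hψbdd' t _ j) (abs_nonneg _)
        (by nlinarith [hCbnn γs, mul_nonneg (Nat.cast_nonneg T : (0:ℝ) ≤ (T:ℝ)) (hCbnn γs)])
      refine (xm_abs (hW01 ω t) _).trans ?_
      linarith [hubd γs ω t]
    calc ∑ t, |xm (W ω t) (Af γs ω + cf γs ω t) * ψ t (S ω, X ω) j|
        ≤ ∑ _t : Fin T, (2 + (T:ℝ) * Cb γs + Cb γs) * Cψ' :=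
          Finset.sum_le_sum fun t _ => hterm t
    _ = (T:ℝ) * ((2 + (T:ℝ) * Cb γs + Cb γs) * Cψ') := by
          rw [Finset.sum_const, Finset.card_univ, Fintype.card_fin, nsmul_eq_mul]
  have hgrad : ∀ j (s : ℝ), Vf (γs + s • (Pi.single j 1 : Fin p → ℝ)) ≤
      Vf γs - s * (∫ ω, Fj j ω ∂μ) + s^2 * ((T:ℝ) * Cψ'^2 / 2) := by
    intro j s
    have hpt : ∀ ω, vf (γs + s • (Pi.single j 1 : Fin p → ℝ)) ω ≤
        vf γs ω - s * Fj j ω + s^2 * ((T:ℝ) * Cψ'^2 / 2) := by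
      intro ω
      have e0 := hmin (γs + s • (Pi.single j 1 : Fin p → ℝ)) ω (Af γs ω)
      refine e0.trans ?_
      unfold Gs
      have hterm : ∀ t : Fin T,
          gg (W ω t) (Af γs ω + cf (γs + s • (Pi.single j 1 : Fin p → ℝ)) ω t)
          ≤ gg (W ω t) (Af γs ω + cf γs ω t)
            - s * (xm (W ω t) (Af γs ω + cf γs ω t) * ψ t (S ω, X ω) j)
            + s^2 * Cψ'^2 / 2 := by
        intro t
        rw [hsingle, ← add_assoc]
        refine (key2 (hW01 ω t) _ _).trans ?_
        have h5 : (s * ψ t (S ω, X ω) j)^2 ≤ s^2 * Cψ'^2 := by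
          rw [mul_pow]
          refine mul_le_mul_of_nonneg_left ?_ (sq_nonneg s)
          nlinarith [hψbdd' t (S ω, X ω) j, abs_nonneg (ψ t (S ω, X ω) j),
            sq_abs (ψ t (S ω, X ω) j)]
        have h6 : xm (W ω t) (Af γs ω + cf γs ω t) * (s * ψ t (S ω, X ω) j)
            = s * (xm (W ω t) (Af γs ω + cf γs ω t) * ψ t (S ω, X ω) j) := by ring
        linarith
      calc ∑ t, gg (W ω t) (Af γs ω + cf (γs + s • (Pi.single j 1 : Fin p → ℝ)) ω t)
          ≤ ∑ t, (gg (W ω t) (Af γs ω + cf γs ω t)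
            - s * (xm (W ω t) (Af γs ω + cf γs ω t) * ψ t (S ω, X ω) j)
            + s^2 * Cψ'^2 / 2) := Finset.sum_le_sum fun t _ => hterm t
      _ = (∑ t, gg (W ω t) (Af γs ω + cf γs ω t))
            - s * (∑ t, xm (W ω t) (Af γs ω + cf γs ω t) * ψ t (S ω, X ω) j)
            + (T:ℝ) * (s^2 * Cψ'^2 / 2) := by
            rw [Finset.sum_add_distrib, Finset.sum_sub_distrib, ← Finset.mul_sum,
              Finset.sum_const, Finset.card_univ, Fintype.card_fin, nsmul_eq_mul]
      _ = vf γs ω - s * Fj j ω + s^2 * ((T:ℝ) * Cψ'^2 / 2) := by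
            rw [hvfapp, hFjapp]; unfold Gs; ring
    have hint1 : Integrable (fun ω => vf γs ω - s * Fj j ω) μ :=
      (hvint γs).sub ((hFjint j).const_mul s)
    simp only [hVfapp]
    calc ∫ ω, vf (γs + s • (Pi.single j 1 : Fin p → ℝ)) ω ∂μ
        ≤ ∫ ω, (vf γs ω - s * Fj j ω + s^2 * ((T:ℝ) * Cψ'^2 / 2)) ∂μ :=
          integral_mono (hvint _) (hint1.add (integrable_const _)) hpt
    _ = (∫ ω, vf γs ω ∂μ) - s * (∫ ω, Fj j ω ∂μ) + s^2 * ((T:ℝ) * Cψ'^2 / 2) := by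
          rw [integral_add hint1 (integrable_const _),
            integral_sub (hvint γs) ((hFjint j).const_mul s), integral_const_mul,
            integral_const, probReal_univ, one_smul]
  have hIj : ∀ j, (∫ ω, Fj j ω ∂μ) = 0 := by
    intro j
    have hC0 : (0:ℝ) ≤ (T:ℝ) * Cψ'^2 / 2 := by positivity
    have h2 : ∀ s : ℝ, 0 ≤ - (s * (∫ ω, Fj j ω ∂μ)) + s^2 * ((T:ℝ) * Cψ'^2 / 2) := by
      intro s
      have hg := hgrad j s
      have hge := hglobal (γs + s • (Pi.single j 1 : Fin p → ℝ))
      linarith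
    have hle : ∀ s : ℝ, 0 < s → (∫ ω, Fj j ω ∂μ) ≤ s * ((T:ℝ) * Cψ'^2 / 2) := by
      intro s hs
      have := h2 s
      nlinarith
    have hge' : ∀ s : ℝ, 0 < s → -(s * ((T:ℝ) * Cψ'^2 / 2)) ≤ (∫ ω, Fj j ω ∂μ) := by
      intro s hs
      have := h2 (-s)
      nlinarith
    have htend : Filter.Tendsto (fun n : ℕ => (1/((n:ℝ)+1)) * ((T:ℝ) * Cψ'^2 / 2))
        Filter.atTop (nhds 0) := by
      have h := tendsto_one_div_add_atTop_nhds_zero_nat.mul_const ((T:ℝ) * Cψ'^2 / 2)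
      rwa [zero_mul] at h
    have hIle : (∫ ω, Fj j ω ∂μ) ≤ 0 := by
      refine ge_of_tendsto htend (Filter.Eventually.of_forall fun n => ?_)
      exact hle (1/((n:ℝ)+1)) (by positivity)
    have hIge : 0 ≤ (∫ ω, Fj j ω ∂μ) := by
      have htend' : Filter.Tendsto (fun n : ℕ => -((1/((n:ℝ)+1)) * ((T:ℝ) * Cψ'^2 / 2)))
          Filter.atTop (nhds 0) := by
        have h := htend.neg
        rwa [neg_zero] at h
      refine le_of_tendsto htend' (Filter.Eventually.of_forall fun n => ?_)
      exact hge' (1/((n:ℝ)+1)) (by positivity)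
    linarith
  -- conclusion
  refine ⟨Af γs, γs, ?_, ?_, ?_⟩
  · -- measurability with respect to σ(W, X)
    have hWX : @Measurable Ωs ((Fin T → ℝ) × 𝒳)
        (MeasurableSpace.comap (fun ω => (W ω, X ω)) inferInstance) _
        (fun ω => (W ω, X ω)) := Measurable.of_comap_le le_rfl
    have hWcm : @Measurable Ωs (Fin T → ℝ)
        (MeasurableSpace.comap (fun ω => (W ω, X ω)) inferInstance) _ W :=
      measurable_fst.comp hWX
    have hXcm : @Measurable Ωs 𝒳
        (MeasurableSpace.comap (fun ω => (W ω, X ω)) inferInstance) _ X :=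
      measurable_snd.comp hWX
    have hccm : @Measurable Ωs (Fin T → ℝ)
        (MeasurableSpace.comap (fun ω => (W ω, X ω)) inferInstance) _ (cf γs) := by
      rw [@measurable_pi_iff]
      intro t
      have : (fun ω => cf γs ω t) = fun ω => ∑ j, ψ t (S ω, X ω) j * γs j :=
        funext fun ω => hcfapp γs ω t
      rw [this]
      exact Finset.measurable_sum _ fun j _ =>
        ((hψmeas t).eval.comp (hSstat.prodMk hXcm)).mul_const _
    have : Af γs = fun ω => Astar (W ω) (cf γs ω) := funext (hAfapp γs)
    rw [this]
    exact Astar_measurable hT hW01 hWcm hccm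
  · -- the p moment conditions
    intro j
    have hcong : ∀ ω, (∑ t,
        (W ω t - Af γs ω - ∑ j', ψ t (S ω, X ω) j' * γs j') *
          ψ t (S ω, X ω) j *
          (1 - W ω t *
            (if W ω t - Af γs ω - ∑ j', ψ t (S ω, X ω) j' * γs j' ≤ 0
              then (1 : ℝ) else 0))) = Fj j ω := by
      intro ω
      rw [hFjapp]
      refine Finset.sum_congr rfl fun t _ => ?_
      rw [← hcfapp γs ω t]
      simp only [sub_sub]
      unfold xm
      ring
    rw [integral_congr_ae (Filter.Eventually.of_forall hcong)]
    exact hIj j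
  · -- the a.s. balance condition
    refine Filter.Eventually.of_forall fun ω => ?_
    calc ∑ t,
        (W ω t - Af γs ω - ∑ j', ψ t (S ω, X ω) j' * γs j') *
          (1 - W ω t *
            (if W ω t - Af γs ω - ∑ j', ψ t (S ω, X ω) j' * γs j' ≤ 0
              then (1 : ℝ) else 0))
        = Phi (W ω) (cf γs ω) (Af γs ω) := by
          unfold Phi xm
          refine Finset.sum_congr rfl fun t _ => ?_
          rw [← hcfapp γs ω t]
          simp only [sub_sub]
    _ = 0 := hPhi0 γs ω
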